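/- Let K = ℂ(t) be the field of rational functions over ℂ, and let W be the Weierstrass curve over K with coefficients a₁ = 1, a₂ = 0, a₃ = t, a₄ = 0, a₆ = 0, i.e. the curve y² + xy + ty = x³. Then (0, 0) is a nonsingular point of W, and the corresponding point in the group of K-rational points of W has order exactly 3 (it is nonzero and 3·(0,0) = 0). -/

import Mathlib

open WeierstrassCurve.Affine WeierstrassCurve.Affine.Point

lemma some_eq_some' {F : Type*} [Field F] {W : WeierstrassCurve.Affine F}
    {x x' y y' : F} (hx : x = x') (hy : y = y') (h : W.Nonsingular x y)
    (h' : W.Nonsingular x' y') :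
    WeierstrassCurve.Affine.Point.some _ _ h = WeierstrassCurve.Affine.Point.some _ _ h' := by
  subst hx hy; rfl

open Classical in
/-- The extremal rational elliptic surface `X_{4,3,1} : y² + xy + ty = x³` over `ℂ(t)` has a
`3`-torsion section at `(0, 0)`: the point `(0, 0)` is nonsingular, nonzero, and is killed
by `3` in the group of `ℂ(t)`-rational points. -/
theorem X431_three_torsion_section
    (W : WeierstrassCurve.Affine (RatFunc ℂ))
    (hW : W = { a₁ := 1, a₂ := 0, a₃ := RatFunc.X, a₄ := 0, a₆ := 0 }) :
    ∃ h : W.Nonsingular 0 0,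
      WeierstrassCurve.Affine.Point.some _ _ h ≠ 0 ∧
      3 • WeierstrassCurve.Affine.Point.some _ _ h = 0 := by
  subst hW
  set W : WeierstrassCurve.Affine (RatFunc ℂ) :=
    { a₁ := 1, a₂ := 0, a₃ := RatFunc.X, a₄ := 0, a₆ := 0 } with hW
  have hX : (RatFunc.X : RatFunc ℂ) ≠ 0 := RatFunc.X_ne_zero
  have h : W.Nonsingular 0 0 := by
    rw [nonsingular_zero]
    exact ⟨rfl, Or.inl hX⟩
  refine ⟨h, fun hne => by simp at hne, ?_⟩
  have hnegY : W.negY 0 0 = -RatFunc.X := by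
    simp [negY, hW]
  have hy0 : (0 : RatFunc ℂ) ≠ W.negY 0 0 := by
    rw [hnegY]; simpa using hX
  have hslope : W.slope 0 0 0 0 = 0 := by
    rw [slope_of_Y_ne rfl hy0]
    simp [hW]
  -- coordinates of 2P
  have hx2 : W.addX 0 0 (W.slope 0 0 0 0) = 0 := by
    rw [hslope]; simp [addX, hW]
  have hy2 : W.addY 0 0 0 (W.slope 0 0 0 0) = -RatFunc.X := by
    rw [hslope]
    simp [addY, negAddY, negY, addX, hW]
  have h2 : W.Nonsingular 0 (-RatFunc.X) := hx2 ▸ hy2 ▸ nonsingular_add h h (fun hxy => hy0 hxy.2)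
  have hdouble : some _ _ h + some _ _ h = some _ _ h2 := by
    rw [add_of_Y_ne hy0]
    exact some_eq_some' hx2 hy2 _ _
  have htriple : some _ _ h + some _ _ h2 = 0 := by
    refine add_of_Y_eq rfl ?_
    simp [negY, hW]
  have h3 : (3 : ℕ) • some _ _ h = some _ _ h + (some _ _ h + some _ _ h) := by
    rw [show (3 : ℕ) = 2 + 1 by rfl, succ_nsmul, succ_nsmul, one_nsmul, add_assoc]
  rw [h3, hdouble, htriple]
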